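/- arXiv:2210.02611 — 2 statements merged into one kernel-verified Lean document; each statement's English description precedes it below -/
import Mathlib

section
/- Every finite undirected multigraph G = (V, E) with at least one vertex admits a fractional orientation y that simultaneously (i) minimizes the maximum fractional in-degree, i.e., max_{v ∈ V} ȳ(v) = min over all fractional orientations y' of max_{v ∈ V} ȳ'(v), and (ii) is locally optimal, i.e., for every edge e = {u, v}, y(e, v) > 0 implies ȳ(v) ≤ ȳ(u). -/
open Finset

/-- A fractional orientation of a finite undirected multigraph whose edges are
indexed by `E`, where edge `e` joins the two distinct vertices `a e` and `b e`.
`y e v` is the (nonnegative) fraction of edge `e` oriented toward `v`, and for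
each edge the two fractions at its endpoints sum to `1`. -/
structure FracOrient (V E : Type*) (a b : E → V) where
  y : E → V → ℝ
  nonneg : ∀ e v, 0 ≤ y e v
  sum_one : ∀ e, y e (a e) + y e (b e) = 1

/-- The fractional in-degree `ȳ(v)`: the sum, over edges incident to `v`,
of the fraction of the edge oriented toward `v`. -/
noncomputable def inDeg {V E : Type*} [Fintype E] [DecidableEq V]
    (a b : E → V) (y : E → V → ℝ) (v : V) : ℝ :=
  ∑ e ∈ univ.filter (fun e => a e = v ∨ b e = v), y e v

/-- The maximum fractional in-degree `max_{v ∈ V} ȳ(v)`. -/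
noncomputable def maxInDeg {V E : Type*} [Fintype E] [DecidableEq V]
    (a b : E → V) (y : E → V → ℝ) : ℝ :=
  sSup (Set.range (inDeg a b y))

/-- The density `|E(S)|/|S|` of a set `S` of vertices: the number of edges with
both endpoints in `S` (counted with multiplicity), divided by `|S|`. -/
noncomputable def density {V E : Type*} [Fintype E] [DecidableEq V]
    (a b : E → V) (S : Finset V) : ℝ :=
  ((univ.filter fun e => a e ∈ S ∧ b e ∈ S).card : ℝ) / S.card

/-- The maximum subgraph density `ρ(G) = max_{∅ ≠ S ⊆ V} |E(S)|/|S|`. -/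
noncomputable def maxDensity {V E : Type*} [Fintype E] [DecidableEq V]
    (a b : E → V) : ℝ :=
  sSup { d : ℝ | ∃ S : Finset V, S.Nonempty ∧ d = density a b S }

/-- A fractional orientation is locally optimal if it never directs any
fraction of an edge toward an endpoint of strictly larger in-degree. -/
def LocallyOpt {V E : Type*} [Fintype E] [DecidableEq V]
    (a b : E → V) (y : E → V → ℝ) : Prop :=
  ∀ e, (0 < y e (b e) → inDeg a b y (b e) ≤ inDeg a b y (a e)) ∧
       (0 < y e (a e) → inDeg a b y (a e) ≤ inDeg a b y (b e))

/-- `(α, β)`-local optimality: if `y(e,v) > 0` then `ȳ(v) < (1+α)·ȳ(u) + β`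
for the other endpoint `u` of `e`. -/
def ApxLocallyOpt {V E : Type*} [Fintype E] [DecidableEq V]
    (a b : E → V) (y : E → V → ℝ) (α β : ℝ) : Prop :=
  ∀ e, (0 < y e (b e) → inDeg a b y (b e) < (1 + α) * inDeg a b y (a e) + β) ∧
       (0 < y e (a e) → inDeg a b y (a e) < (1 + α) * inDeg a b y (b e) + β)

section Aux

variable {V E : Type*} [Fintype V] [Fintype E] [DecidableEq V]

/-- The feasible set of fractional orientations, as a subset of `E → V → ℝ`. -/
def Kset (a b : E → V) : Set (E → V → ℝ) :=
  Set.Icc 0 1 ∩ {y | ∀ e, y e (a e) + y e (b e) = 1}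

/-- The convex potential `Φ(y) = ∑_v ȳ(v)²`. -/
noncomputable def Phi (a b : E → V) (y : E → V → ℝ) : ℝ :=
  ∑ v, (inDeg a b y v) ^ 2

lemma inDeg_swap (a b : E → V) (y : E → V → ℝ) : inDeg b a y = inDeg a b y := by
  funext v
  unfold inDeg
  congr 1
  ext e
  simp [or_comm]

lemma Kset_swap (a b : E → V) : Kset b a = Kset a b := by
  unfold Kset
  ext y
  simp only [Set.mem_inter_iff, Set.mem_setOf_eq]
  constructor <;> rintro ⟨h1, h2⟩ <;> exact ⟨h1, fun e => by linarith [h2 e]⟩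

lemma Phi_swap (a b : E → V) : Phi b a = Phi a b := by
  funext y
  unfold Phi
  rw [inDeg_swap]

/-- Key perturbation lemma: a minimizer of `Φ` on `Kset` is locally optimal
(one direction). -/
lemma key_min (a b : E → V) (hab : ∀ e, a e ≠ b e) {y : E → V → ℝ}
    (hK : y ∈ Kset a b) (hmin : ∀ z ∈ Kset a b, Phi a b y ≤ Phi a b z)
    (e : E) (hpos : 0 < y e (b e)) :
    inDeg a b y (b e) ≤ inDeg a b y (a e) := by
  classical
  by_contra hlt
  push_neg at hlt
  set A := inDeg a b y (a e) with hA
  set B := inDeg a b y (b e) with hB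
  obtain ⟨hIcc, hsum⟩ := hK
  have hy01 : ∀ e' v, 0 ≤ y e' v ∧ y e' v ≤ 1 := fun e' v => ⟨hIcc.1 e' v, hIcc.2 e' v⟩
  set ε : ℝ := min (y e (b e)) ((B - A) / 2) with hε
  have hε0 : 0 < ε := lt_min hpos (by linarith)
  have hε1 : ε ≤ y e (b e) := min_le_left _ _
  have hε2 : ε < B - A := lt_of_le_of_lt (min_le_right _ _) (by linarith)
  set y' : E → V → ℝ := fun e' v =>
    if e' = e ∧ v = a e then y e' v + ε
    else if e' = e ∧ v = b e then y e' v - ε else y e' v with hy'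
  have hba : b e ≠ a e := (hab e).symm
  have hy'a : y' e (a e) = y e (a e) + ε := by simp [hy']
  have hy'b : y' e (b e) = y e (b e) - ε := by simp [hy', hba]
  have hy'ne : ∀ e', e' ≠ e → ∀ v, y' e' v = y e' v := by
    intro e' h v; simp [hy', h]
  have hy'v : ∀ e' v, v ≠ a e → v ≠ b e → y' e' v = y e' v := by
    intro e' v h1 h2; simp [hy', h1, h2]
  have hdega : inDeg a b y' (a e) = A + ε := by
    have he : e ∈ univ.filter (fun e' => a e' = a e ∨ b e' = a e) := by simp
    rw [hA]
    unfold inDeg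
    rw [← Finset.add_sum_erase _ _ he, ← Finset.add_sum_erase _ _ he, hy'a]
    rw [Finset.sum_congr rfl (fun e' he' => hy'ne e' (Finset.ne_of_mem_erase he') (a e))]
    ring
  have hdegb : inDeg a b y' (b e) = B - ε := by
    have he : e ∈ univ.filter (fun e' => a e' = b e ∨ b e' = b e) := by simp
    rw [hB]
    unfold inDeg
    rw [← Finset.add_sum_erase _ _ he, ← Finset.add_sum_erase _ _ he, hy'b]
    rw [Finset.sum_congr rfl (fun e' he' => hy'ne e' (Finset.ne_of_mem_erase he') (b e))]
    ring
  have hdego : ∀ v, v ≠ a e → v ≠ b e → inDeg a b y' v = inDeg a b y v := by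
    intro v h1 h2
    unfold inDeg
    exact Finset.sum_congr rfl (fun e' _ => hy'v e' v h1 h2)
  have hK' : y' ∈ Kset a b := by
    refine ⟨Set.mem_Icc.mpr ⟨Pi.le_def.mpr fun e' => Pi.le_def.mpr fun v => ?_,
      Pi.le_def.mpr fun e' => Pi.le_def.mpr fun v => ?_⟩, fun e' => ?_⟩
    · show (0:ℝ) ≤ y' e' v
      by_cases h1 : e' = e ∧ v = a e
      · obtain ⟨rfl, rfl⟩ := h1
        rw [hy'a]
        linarith [(hy01 e' (a e')).1]
      · by_cases h2 : e' = e ∧ v = b e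
        · obtain ⟨rfl, rfl⟩ := h2
          rw [hy'b]
          linarith
        · rw [hy'] ; simp only [if_neg h1, if_neg h2]
          exact (hy01 e' v).1
    · show y' e' v ≤ (1:ℝ)
      by_cases h1 : e' = e ∧ v = a e
      · obtain ⟨rfl, rfl⟩ := h1
        rw [hy'a]
        have := hsum e'
        linarith [(hy01 e' (b e')).1]
      · by_cases h2 : e' = e ∧ v = b e
        · obtain ⟨rfl, rfl⟩ := h2
          rw [hy'b]
          linarith [(hy01 e' (b e')).2]
        · rw [hy'] ; simp only [if_neg h1, if_neg h2]
          exact (hy01 e' v).2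
    · by_cases he' : e' = e
      · subst he'
        rw [hy'a, hy'b]
        linarith [hsum e']
      · rw [hy'ne e' he', hy'ne e' he']
        exact hsum e'
  have hsub : Phi a b y' - Phi a b y = ((A + ε)^2 - A^2) + ((B - ε)^2 - B^2) := by
    unfold Phi
    rw [← Finset.sum_sub_distrib]
    have hzero : ∑ v, ((inDeg a b y' v)^2 - (inDeg a b y v)^2)
        = ∑ v ∈ ({a e, b e} : Finset V), ((inDeg a b y' v)^2 - (inDeg a b y v)^2) := by
      refine (Finset.sum_subset (Finset.subset_univ _) ?_).symm
      intro v _ hv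
      have h1 : v ≠ a e := by intro h; exact hv (by simp [h])
      have h2 : v ≠ b e := by intro h; exact hv (by simp [h])
      rw [hdego v h1 h2]; ring
    rw [hzero, Finset.sum_pair (hab e), hdega, hdegb]
  have hΦ : Phi a b y' < Phi a b y := by nlinarith [hε0, hε2]
  exact absurd (hmin y' hK') (by linarith)

/-- For any orientation and any nonempty vertex set, the density is at most
the maximum in-degree. -/
lemma density_le_maxInDeg [Nonempty V] (a b : E → V) (hab : ∀ e, a e ≠ b e)
    (o : FracOrient V E a b) (S : Finset V) (hS : S.Nonempty) :
    density a b S ≤ maxInDeg a b o.y := by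
  classical
  have hub : ∀ v, inDeg a b o.y v ≤ maxInDeg a b o.y := fun v =>
    le_csSup (Set.Finite.bddAbove (Set.finite_range _)) ⟨v, rfl⟩
  have hkey : ((univ.filter fun e => a e ∈ S ∧ b e ∈ S).card : ℝ)
      ≤ ∑ v ∈ S, inDeg a b o.y v := by
    calc ((univ.filter fun e => a e ∈ S ∧ b e ∈ S).card : ℝ)
        = ∑ e : E, (if a e ∈ S ∧ b e ∈ S then (1:ℝ) else 0) := by
          rw [Finset.sum_boole]
      _ ≤ ∑ e : E, ∑ v ∈ S, (if a e = v ∨ b e = v then o.y e v else 0) := by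
          apply Finset.sum_le_sum
          intro e _
          by_cases h : a e ∈ S ∧ b e ∈ S
          · rw [if_pos h]
            have hsub : ({a e, b e} : Finset V) ⊆ S := by
              intro x hx
              simp only [Finset.mem_insert, Finset.mem_singleton] at hx
              rcases hx with rfl | rfl
              exacts [h.1, h.2]
            calc (1:ℝ) = (if a e = a e ∨ b e = a e then o.y e (a e) else 0)
                  + (if a e = b e ∨ b e = b e then o.y e (b e) else 0) := by
                  rw [if_pos (Or.inl rfl), if_pos (Or.inr rfl)]
                  exact (o.sum_one e).symm
              _ = ∑ v ∈ ({a e, b e} : Finset V),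
                    (if a e = v ∨ b e = v then o.y e v else 0) :=
                  (Finset.sum_pair (f := fun v => if a e = v ∨ b e = v then o.y e v else 0) (hab e)).symm
              _ ≤ ∑ v ∈ S, (if a e = v ∨ b e = v then o.y e v else 0) := by
                  apply Finset.sum_le_sum_of_subset_of_nonneg hsub
                  intro v _ _
                  split_ifs
                  exacts [o.nonneg e v, le_rfl]
          · rw [if_neg h]
            apply Finset.sum_nonneg
            intro v _
            split_ifs
            exacts [o.nonneg e v, le_rfl]
      _ = ∑ v ∈ S, inDeg a b o.y v := by
          rw [Finset.sum_comm]
          refine Finset.sum_congr rfl fun v _ => ?_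
          unfold inDeg
          rw [Finset.sum_filter]
  have hcard : (0:ℝ) < S.card := by exact_mod_cast Finset.card_pos.mpr hS
  rw [density, div_le_iff₀ hcard]
  calc ((univ.filter fun e => a e ∈ S ∧ b e ∈ S).card : ℝ)
      ≤ ∑ v ∈ S, inDeg a b o.y v := hkey
    _ ≤ ∑ _v ∈ S, maxInDeg a b o.y := Finset.sum_le_sum fun v _ => hub v
    _ = maxInDeg a b o.y * S.card := by rw [Finset.sum_const, nsmul_eq_mul]; ring

/-- A locally optimal orientation achieves a density lower bound: its max
in-degree is at most the density of its set of maximizing vertices. -/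
lemma maxInDeg_le_density [Nonempty V] (a b : E → V) (hab : ∀ e, a e ≠ b e)
    (o : FracOrient V E a b) (hloc : LocallyOpt a b o.y) :
    ∃ S : Finset V, S.Nonempty ∧ maxInDeg a b o.y ≤ density a b S := by
  classical
  obtain ⟨v0, hv0⟩ := Finite.exists_max (inDeg a b o.y)
  set M := inDeg a b o.y v0 with hM
  set S := univ.filter (fun v => inDeg a b o.y v = M) with hSdef
  have hv0S : v0 ∈ S := by rw [hSdef, Finset.mem_filter]; exact ⟨Finset.mem_univ _, rfl⟩
  have hSne : S.Nonempty := ⟨v0, hv0S⟩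
  have hmemS : ∀ v, v ∈ S ↔ inDeg a b o.y v = M := by
    intro v; simp [hSdef]
  have hmax : maxInDeg a b o.y = M := by
    refine le_antisymm (csSup_le (Set.range_nonempty _) ?_)
      (le_csSup (Set.Finite.bddAbove (Set.finite_range _)) ⟨v0, rfl⟩)
    rintro x ⟨v, rfl⟩
    exact hv0 v
  refine ⟨S, hSne, ?_⟩
  rw [hmax]
  have hub : ∑ v ∈ S, inDeg a b o.y v
      ≤ ((univ.filter fun e => a e ∈ S ∧ b e ∈ S).card : ℝ) := by
    calc ∑ v ∈ S, inDeg a b o.y v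
        = ∑ e : E, ∑ v ∈ S, (if a e = v ∨ b e = v then o.y e v else 0) := by
          rw [Finset.sum_comm]
          refine Finset.sum_congr rfl fun v _ => ?_
          unfold inDeg
          rw [Finset.sum_filter]
      _ ≤ ∑ e : E, (if a e ∈ S ∧ b e ∈ S then (1:ℝ) else 0) := by
          apply Finset.sum_le_sum
          intro e _
          have hres : ∑ v ∈ S ∩ ({a e, b e} : Finset V),
              (if a e = v ∨ b e = v then o.y e v else 0)
              = ∑ v ∈ S, (if a e = v ∨ b e = v then o.y e v else 0) := by
            apply Finset.sum_subset Finset.inter_subset_left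
            intro v hv hv'
            rw [if_neg]
            rintro (rfl | rfl) <;>
              exact hv' (Finset.mem_inter.mpr ⟨hv, by simp⟩)
          rw [← hres]
          by_cases ha : a e ∈ S <;> by_cases hb : b e ∈ S
          · rw [if_pos ⟨ha, hb⟩]
            calc ∑ v ∈ S ∩ ({a e, b e} : Finset V),
                  (if a e = v ∨ b e = v then o.y e v else 0)
                ≤ ∑ v ∈ ({a e, b e} : Finset V),
                  (if a e = v ∨ b e = v then o.y e v else 0) := by
                  apply Finset.sum_le_sum_of_subset_of_nonneg Finset.inter_subset_right
                  intro v _ _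
                  split_ifs
                  exacts [o.nonneg e v, le_rfl]
              _ = (if a e = a e ∨ b e = a e then o.y e (a e) else 0)
                  + (if a e = b e ∨ b e = b e then o.y e (b e) else 0) :=
                  Finset.sum_pair (hab e)
              _ = 1 := by
                  rw [if_pos (Or.inl rfl), if_pos (Or.inr rfl)]
                  exact o.sum_one e
          · rw [if_neg (by tauto)]
            have hya : o.y e (a e) = 0 := by
              by_contra hne
              have hpos : 0 < o.y e (a e) := lt_of_le_of_ne (o.nonneg e (a e)) (Ne.symm hne)
              have h1 := (hloc e).2 hpos
              have h2 : inDeg a b o.y (a e) = M := (hmemS _).mp ha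
              have h3 : inDeg a b o.y (b e) ≤ M := hv0 _
              exact hb ((hmemS _).mpr (le_antisymm h3 (h2 ▸ h1)))
            calc ∑ v ∈ S ∩ ({a e, b e} : Finset V),
                  (if a e = v ∨ b e = v then o.y e v else 0)
                ≤ ∑ v ∈ ({a e} : Finset V),
                  (if a e = v ∨ b e = v then o.y e v else 0) := by
                  apply Finset.sum_le_sum_of_subset_of_nonneg
                  · intro x hx
                    obtain ⟨hx1, hx2⟩ := Finset.mem_inter.mp hx
                    simp only [Finset.mem_insert, Finset.mem_singleton] at hx2 ⊢
                    rcases hx2 with rfl | rfl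
                    · rfl
                    · exact absurd hx1 hb
                  · intro v _ _
                    split_ifs
                    exacts [o.nonneg e v, le_rfl]
              _ = 0 := by
                  rw [Finset.sum_singleton, if_pos (Or.inl rfl), hya]
          · rw [if_neg (by tauto)]
            have hyb : o.y e (b e) = 0 := by
              by_contra hne
              have hpos : 0 < o.y e (b e) := lt_of_le_of_ne (o.nonneg e (b e)) (Ne.symm hne)
              have h1 := (hloc e).1 hpos
              have h2 : inDeg a b o.y (b e) = M := (hmemS _).mp hb
              have h3 : inDeg a b o.y (a e) ≤ M := hv0 _
              exact ha ((hmemS _).mpr (le_antisymm h3 (h2 ▸ h1)))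
            calc ∑ v ∈ S ∩ ({a e, b e} : Finset V),
                  (if a e = v ∨ b e = v then o.y e v else 0)
                ≤ ∑ v ∈ ({b e} : Finset V),
                  (if a e = v ∨ b e = v then o.y e v else 0) := by
                  apply Finset.sum_le_sum_of_subset_of_nonneg
                  · intro x hx
                    obtain ⟨hx1, hx2⟩ := Finset.mem_inter.mp hx
                    simp only [Finset.mem_insert, Finset.mem_singleton] at hx2 ⊢
                    rcases hx2 with rfl | rfl
                    · exact absurd hx1 ha
                    · rfl
                  · intro v _ _
                    split_ifs
                    exacts [o.nonneg e v, le_rfl]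
              _ = 0 := by
                  rw [Finset.sum_singleton, if_pos (Or.inr rfl), hyb]
          · rw [if_neg (by tauto)]
            have : S ∩ ({a e, b e} : Finset V) = ∅ := by
              ext x
              simp only [Finset.mem_inter, Finset.mem_insert, Finset.mem_singleton,
                Finset.notMem_empty, iff_false]
              rintro ⟨hx1, rfl | rfl⟩
              exacts [ha hx1, hb hx1]
            rw [this, Finset.sum_empty]
      _ = ((univ.filter fun e => a e ∈ S ∧ b e ∈ S).card : ℝ) := by
          rw [Finset.sum_boole]
  have hcard : (0:ℝ) < S.card := by exact_mod_cast Finset.card_pos.mpr hSne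
  rw [density, le_div_iff₀ hcard]
  have hsumM : ∑ v ∈ S, inDeg a b o.y v = M * S.card := by
    rw [Finset.sum_congr rfl (fun v hv => (hmemS v).mp hv), Finset.sum_const,
      nsmul_eq_mul]
    ring
  linarith

end Aux

/-- Every finite undirected multigraph admits a fractional
orientation that is simultaneously optimal (minimizing the maximum fractional
in-degree) and locally optimal. -/
theorem exists_locallyOpt_min_orientation {V E : Type*} [Fintype V] [Fintype E]
    [DecidableEq V] [Nonempty V] (a b : E → V) (hab : ∀ e, a e ≠ b e) :
    ∃ o : FracOrient V E a b, LocallyOpt a b o.y ∧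
      IsLeast { μ : ℝ | ∃ o' : FracOrient V E a b, μ = maxInDeg a b o'.y }
        (maxInDeg a b o.y) := by
  classical
  have hKc : IsCompact (Kset a b) := by
    apply IsCompact.inter_right isCompact_Icc
    have heq : {y : E → V → ℝ | ∀ e, y e (a e) + y e (b e) = 1}
        = ⋂ e, {y : E → V → ℝ | y e (a e) + y e (b e) = 1} := by
      ext y; simp [Set.mem_iInter]
    rw [heq]
    refine isClosed_iInter fun e => isClosed_eq ?_ continuous_const
    fun_prop
  have hKne : (Kset a b).Nonempty := by
    refine ⟨fun _ _ => 1/2, Set.mem_Icc.mpr ⟨?_, ?_⟩, fun e => by norm_num⟩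
    · exact Pi.le_def.mpr fun e => Pi.le_def.mpr fun v => by norm_num
    · exact Pi.le_def.mpr fun e => Pi.le_def.mpr fun v => by norm_num
  have hcont : Continuous (Phi a b) := by
    unfold Phi inDeg
    apply continuous_finset_sum
    intro v _
    exact (continuous_finset_sum _ fun e _ =>
      (continuous_apply v).comp (continuous_apply e)).pow 2
  obtain ⟨y, hyK, hymin⟩ := hKc.exists_isMinOn hKne hcont.continuousOn
  have hmin : ∀ z ∈ Kset a b, Phi a b y ≤ Phi a b z := fun z hz => hymin hz
  have hnn : ∀ e v, 0 ≤ y e v := fun e v => hyK.1.1 e v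
  set o : FracOrient V E a b := ⟨y, hnn, hyK.2⟩ with ho
  have hloc : LocallyOpt a b o.y := by
    intro e
    constructor
    · exact fun h => key_min a b hab ⟨hyK.1, hyK.2⟩ hmin e h
    · intro h
      have hK2 : y ∈ Kset b a := (Kset_swap a b).symm ▸ hyK
      have hmin2 : ∀ z ∈ Kset b a, Phi b a y ≤ Phi b a z := by
        rw [Kset_swap, Phi_swap]
        exact hmin
      have := key_min b a (fun e => (hab e).symm) hK2 hmin2 e h
      rw [inDeg_swap] at this
      exact this
  refine ⟨o, hloc, ⟨o, rfl⟩, ?_⟩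
  rintro μ ⟨o', rfl⟩
  obtain ⟨S, hSne, hle⟩ := maxInDeg_le_density a b hab o hloc
  exact hle.trans (density_le_maxInDeg a b hab o' S hSne)
end

section
/- Let G = (V, E) be a finite undirected multigraph with at least one vertex. Let arb(G) denote the minimum over all integral orientations D of G of the maximum in-degree max_{v ∈ V} d⁻_D(v), and let lpopt(G) denote the minimum over all fractional orientations y of G of the maximum fractional in-degree max_{v ∈ V} ȳ(v). Then lpopt(G) ≤ arb(G) ≤ lpopt(G) + 1. -/
open Finset

/-- The in-degree of `v` under an integral orientation given by a head map
`h : E → V` (edge `e` is directed toward `h e`). -/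
noncomputable def intInDeg {V E : Type*} [Fintype E] [DecidableEq V]
    (h : E → V) (v : V) : ℝ :=
  ((univ.filter fun e => h e = v).card : ℝ)

section Aux
set_option linter.unusedSectionVars false

open Finset

variable {V E : Type*} [Fintype V] [Fintype E] [DecidableEq V]

/-- Integral orientation as a fractional orientation. -/
noncomputable def intFrac (a b : E → V) (hab : ∀ e, a e ≠ b e) (h : E → V)
    (hh : ∀ e, h e = a e ∨ h e = b e) : FracOrient V E a b where
  y e v := if h e = v then 1 else 0
  nonneg e v := by split <;> norm_num
  sum_one e := by
    rcases hh e with he | he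
    · rw [if_pos he, if_neg (by rw [he]; exact hab e), add_zero]
    · rw [if_pos he, if_neg (by rw [he]; exact fun hc => hab e hc.symm), zero_add]

lemma intFrac_inDeg (a b : E → V) (hab : ∀ e, a e ≠ b e) (h : E → V)
    (hh : ∀ e, h e = a e ∨ h e = b e) (v : V) :
    inDeg a b (intFrac a b hab h hh).y v = intInDeg h v := by
  rw [inDeg, intInDeg, intFrac]
  rw [Finset.sum_boole, Finset.filter_filter]
  congr 2
  apply Finset.filter_congr
  intro e _
  constructor
  · rintro ⟨_, hv⟩; exact hv
  · intro hv
    refine ⟨?_, hv⟩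
    rcases hh e with he | he
    · left; rw [← he, hv]
    · right; rw [← he, hv]

lemma inDeg_nonneg' (a b : E → V) (o : FracOrient V E a b) (v : V) :
    0 ≤ inDeg a b o.y v :=
  Finset.sum_nonneg fun e _ => o.nonneg e v

lemma maxInDeg_nonneg' [Nonempty V] (a b : E → V) (o : FracOrient V E a b) :
    0 ≤ maxInDeg a b o.y := by
  obtain ⟨v⟩ := ‹Nonempty V›
  exact le_trans (inDeg_nonneg' a b o v)
    (le_csSup (Set.Finite.bddAbove (Set.finite_range _)) ⟨v, rfl⟩)

/-- key density bound : |E(S)| ≤ |S| * maxInDeg for any fractional orientation. -/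
lemma cardE_le_maxInDeg (a b : E → V) (hab : ∀ e, a e ≠ b e)
    (o : FracOrient V E a b) (S : Finset V) :
    ((univ.filter fun e => a e ∈ S ∧ b e ∈ S).card : ℝ) ≤ S.card * maxInDeg a b o.y := by
  have h1 : ((univ.filter fun e => a e ∈ S ∧ b e ∈ S).card : ℝ)
      ≤ ∑ v ∈ S, inDeg a b o.y v := by
    have hswap : ∑ v ∈ S, inDeg a b o.y v
        = ∑ e : E, ∑ v ∈ S.filter (fun v => a e = v ∨ b e = v), o.y e v := by
      calc ∑ v ∈ S, inDeg a b o.y v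
          = ∑ v ∈ S, ∑ e : E, if a e = v ∨ b e = v then o.y e v else 0 := by
            simp only [inDeg, Finset.sum_filter]
        _ = ∑ e : E, ∑ v ∈ S, if a e = v ∨ b e = v then o.y e v else 0 :=
            Finset.sum_comm
        _ = ∑ e : E, ∑ v ∈ S.filter (fun v => a e = v ∨ b e = v), o.y e v := by
            simp only [Finset.sum_filter]
    rw [hswap]
    calc ((univ.filter fun e => a e ∈ S ∧ b e ∈ S).card : ℝ)
        = ∑ e ∈ univ.filter (fun e => a e ∈ S ∧ b e ∈ S), (1 : ℝ) := by
          rw [Finset.sum_const, nsmul_eq_mul, mul_one]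
      _ ≤ ∑ e ∈ univ.filter (fun e => a e ∈ S ∧ b e ∈ S),
            ∑ v ∈ S.filter (fun v => a e = v ∨ b e = v), o.y e v := by
          apply Finset.sum_le_sum
          intro e he
          simp only [Finset.mem_filter, Finset.mem_univ, true_and] at he
          have hsub : ({a e, b e} : Finset V) ⊆ S.filter (fun v => a e = v ∨ b e = v) := by
            intro v hv
            simp only [Finset.mem_insert, Finset.mem_singleton] at hv
            simp only [Finset.mem_filter]
            rcases hv with rfl | rfl
            · exact ⟨he.1, Or.inl rfl⟩
            · exact ⟨he.2, Or.inr rfl⟩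
          have hpair : ∑ v ∈ ({a e, b e} : Finset V), o.y e v = 1 := by
            rw [Finset.sum_pair (hab e)]
            exact o.sum_one e
          rw [← hpair]
          exact Finset.sum_le_sum_of_subset_of_nonneg hsub
            (fun v _ _ => o.nonneg e v)
      _ ≤ ∑ e : E, ∑ v ∈ S.filter (fun v => a e = v ∨ b e = v), o.y e v := by
          apply Finset.sum_le_sum_of_subset_of_nonneg (Finset.filter_subset _ _)
          intro e _ _
          exact Finset.sum_nonneg fun v _ => o.nonneg e v
  have h2 : ∑ v ∈ S, inDeg a b o.y v ≤ S.card * maxInDeg a b o.y := by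
    calc ∑ v ∈ S, inDeg a b o.y v ≤ ∑ _v ∈ S, maxInDeg a b o.y :=
          Finset.sum_le_sum fun v _ =>
            le_csSup (Set.Finite.bddAbove (Set.finite_range _)) ⟨v, rfl⟩
      _ = S.card * maxInDeg a b o.y := by rw [Finset.sum_const, nsmul_eq_mul]
  linarith

end Aux

/-- Let `arb(G)` be the minimum over integral orientations of
the maximum in-degree, and `lpopt(G)` the minimum over fractional orientations
of the maximum fractional in-degree. Then `lpopt(G) ≤ arb(G) ≤ lpopt(G) + 1`. -/
theorem lpopt_le_arb_le_lpopt_add_one {V E : Type*} [Fintype V] [Fintype E]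
    [DecidableEq V] [Nonempty V] (a b : E → V) (hab : ∀ e, a e ≠ b e) :
    sInf { μ : ℝ | ∃ o : FracOrient V E a b, μ = maxInDeg a b o.y } ≤
      sInf { μ : ℝ | ∃ h : E → V, (∀ e, h e = a e ∨ h e = b e) ∧
        μ = sSup (Set.range (intInDeg h)) } ∧
    sInf { μ : ℝ | ∃ h : E → V, (∀ e, h e = a e ∨ h e = b e) ∧
        μ = sSup (Set.range (intInDeg h)) } ≤
      sInf { μ : ℝ | ∃ o : FracOrient V E a b, μ = maxInDeg a b o.y } + 1 := by

  classical
  set Sfrac := { μ : ℝ | ∃ o : FracOrient V E a b, μ = maxInDeg a b o.y } with hSfrac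
  set Sint := { μ : ℝ | ∃ h : E → V, (∀ e, h e = a e ∨ h e = b e) ∧
      μ = sSup (Set.range (intInDeg h)) } with hSint
  have hsub : Sint ⊆ Sfrac := by
    rintro μ ⟨h, hh, rfl⟩
    refine ⟨intFrac a b hab h hh, ?_⟩
    have hfun : inDeg a b (intFrac a b hab h hh).y = intInDeg h :=
      funext (intFrac_inDeg a b hab h hh)
    rw [maxInDeg, hfun]
  have hneInt : Sint.Nonempty := ⟨_, a, fun e => Or.inl rfl, rfl⟩
  have hneFrac : Sfrac.Nonempty := by
    obtain ⟨μ, hμ⟩ := hneInt; exact ⟨μ, hsub hμ⟩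
  have hbddFrac : BddBelow Sfrac := by
    refine ⟨0, ?_⟩
    rintro μ ⟨o, rfl⟩
    exact maxInDeg_nonneg' a b o
  have hbddInt : BddBelow Sint := hbddFrac.mono hsub
  refine ⟨csInf_le_csInf hbddFrac hneInt hsub, ?_⟩
  set L := sInf Sfrac with hL
  have hL0 : 0 ≤ L := le_csInf hneFrac (by rintro μ ⟨o, rfl⟩; exact maxInDeg_nonneg' a b o)
  have hdens : ∀ S : Finset V, S.Nonempty →
      ((univ.filter fun e => a e ∈ S ∧ b e ∈ S).card : ℝ) ≤ L * S.card := by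
    intro S hS
    have hSpos : (0:ℝ) < S.card := by exact_mod_cast hS.card_pos
    have hdiv : ((univ.filter fun e => a e ∈ S ∧ b e ∈ S).card : ℝ) / S.card ≤ L := by
      apply le_csInf hneFrac
      rintro μ ⟨o, rfl⟩
      rw [div_le_iff₀ hSpos]
      have := cardE_le_maxInDeg a b hab o S
      linarith
    calc ((univ.filter fun e => a e ∈ S ∧ b e ∈ S).card : ℝ)
        = ((univ.filter fun e => a e ∈ S ∧ b e ∈ S).card : ℝ) / S.card * S.card := by
          field_simp
      _ ≤ L * S.card := mul_le_mul_of_nonneg_right hdiv hSpos.le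
  set k := ⌈L⌉₊ with hk
  have hLk : L ≤ (k : ℝ) := Nat.le_ceil L
  have hall_cond : ∀ s : Finset E,
      s.card ≤ (s.biUnion (fun e =>
        (({a e, b e} : Finset V) ×ˢ (univ : Finset (Fin k))))).card := by
    intro s
    rcases s.eq_empty_or_nonempty with rfl | hs
    · simp
    set S := s.biUnion (fun e => ({a e, b e} : Finset V)) with hSdef
    have hbi : s.biUnion (fun e => (({a e, b e} : Finset V) ×ˢ (univ : Finset (Fin k))))
        = S ×ˢ (univ : Finset (Fin k)) := by
      ext ⟨v, i⟩
      simp [Finset.mem_biUnion, Finset.mem_product, hSdef]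
    rw [hbi, Finset.card_product, Finset.card_univ, Fintype.card_fin]
    have hSne : S.Nonempty := by
      obtain ⟨e, he⟩ := hs
      exact ⟨a e, Finset.mem_biUnion.mpr ⟨e, he, by simp⟩⟩
    have hssub : s ⊆ univ.filter (fun e => a e ∈ S ∧ b e ∈ S) := by
      intro e he
      simp only [Finset.mem_filter, Finset.mem_univ, true_and]
      exact ⟨Finset.mem_biUnion.mpr ⟨e, he, by simp⟩,
        Finset.mem_biUnion.mpr ⟨e, he, by simp⟩⟩
    have h1 : (s.card : ℝ) ≤ L * S.card :=
      le_trans (by exact_mod_cast Finset.card_le_card hssub) (hdens S hSne)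
    have h2 : (s.card : ℝ) ≤ ((S.card * k : ℕ) : ℝ) := by
      push_cast
      calc (s.card : ℝ) ≤ L * S.card := h1
        _ ≤ (k : ℝ) * S.card := mul_le_mul_of_nonneg_right hLk (by positivity)
        _ = (S.card : ℝ) * k := by ring
    exact_mod_cast h2
  obtain ⟨f, hf_inj, hf_mem⟩ :=
    (Finset.all_card_le_biUnion_card_iff_exists_injective _).mp hall_cond
  set h : E → V := fun e => (f e).1 with hhdef
  have hh : ∀ e, h e = a e ∨ h e = b e := by
    intro e
    have := hf_mem e
    rw [Finset.mem_product] at this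
    have h1 := this.1
    simp only [Finset.mem_insert, Finset.mem_singleton] at h1
    exact h1
  have hdeg : ∀ v, intInDeg h v ≤ (k : ℝ) := by
    intro v
    rw [intInDeg]
    have hcard : (univ.filter fun e => h e = v).card
        ≤ (({v} : Finset V) ×ˢ (univ : Finset (Fin k))).card := by
      apply Finset.card_le_card_of_injOn f
      · intro e he
        simp only [Finset.mem_coe, Finset.mem_filter, Finset.mem_univ, true_and] at he ⊢
        rw [Finset.mem_product]
        exact ⟨by simp [← he, hhdef], Finset.mem_univ _⟩
      · exact fun x _ y _ hxy => hf_inj hxy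
    have : (({v} : Finset V) ×ˢ (univ : Finset (Fin k))).card = k := by
      rw [Finset.card_product, Finset.card_singleton, Finset.card_univ,
        Fintype.card_fin, one_mul]
    rw [this] at hcard
    exact_mod_cast hcard
  have hsup : sSup (Set.range (intInDeg h)) ≤ (k : ℝ) :=
    csSup_le (Set.range_nonempty _) (by rintro x ⟨v, rfl⟩; exact hdeg v)
  calc sInf Sint ≤ sSup (Set.range (intInDeg h)) := csInf_le hbddInt ⟨h, hh, rfl⟩
    _ ≤ (k : ℝ) := hsup
    _ ≤ L + 1 := (Nat.ceil_lt_add_one hL0).le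
end
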